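/- Let P be a finite PIP and x ∈ P. The covering relations in the face poset of ⊞_P are exactly: C(I, M \ {x}) ⋖ C(I, M) and C(I \ {x}, M \ {x}) ⋖ C(I, M), for x ∈ M. Moreover, the pairs of faces that share a common cover but have no meet are exactly the pairs {C(I, M \ {x}), C(I \ {x}, M \ {x})} for x ∈ M. -/
import Mathlib


open Finset

variable {P : Type*} [Fintype P] [DecidableEq P] [PartialOrder P]

/-- A subset is consistent if it contains no inconsistent pair. -/
def Consistent (incons : P → P → Prop) (S : Finset P) : Prop :=
  ∀ a ∈ S, ∀ b ∈ S, ¬ incons a b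

/-- A downset (order ideal). -/
def IsDownset (I : Finset P) : Prop :=
  ∀ x ∈ I, ∀ y, y ≤ x → y ∈ I

open Classical in
/-- The maximal elements of a finite set. -/
noncomputable def maxElems (I : Finset P) : Finset P :=
  I.filter (fun x => ∀ y ∈ I, ¬ x < y)

open Classical in
/-- The downset generated by a set. -/
noncomputable def downGen (A : Finset P) : Finset P :=
  Finset.univ.filter (fun x => ∃ a ∈ A, x ≤ a)

/-- A consistent antichain: the faces of the crossing complex `Δ_P`. -/
def ConsAntichain (incons : P → P → Prop) (A : Finset P) : Prop :=
  (∀ a ∈ A, ∀ b ∈ A, a ≠ b → ¬ a ≤ b) ∧ Consistent incons A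

/-- A face of the cubical complex `⊞_P`: a pair (I, M) with I a consistent
downset and M ⊆ max I. -/
def IsFace (incons : P → P → Prop) (I M : Finset P) : Prop :=
  IsDownset I ∧ Consistent incons I ∧ M ⊆ maxElems I

/-- The face-containment order on faces of `⊞_P`:
`C(I',M') ⊆ C(I,M)` iff `M' ⊆ M` and `I \ M ⊆ I' ⊆ I`. -/
def FaceLE (p q : Finset P × Finset P) : Prop :=
  p.2 ⊆ q.2 ∧ q.1 \ q.2 ⊆ p.1 ∧ p.1 ⊆ q.1

/-- A pair is a face of `⊞_P`. -/
def IsFaceP (incons : P → P → Prop) (p : Finset P × Finset P) : Prop :=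
  IsFace incons p.1 p.2

/-- Strict face-containment. -/
def FaceLT (p q : Finset P × Finset P) : Prop :=
  FaceLE p q ∧ p ≠ q

/-- `q` covers `p` in the face poset of `⊞_P`. -/
def FaceCovers (incons : P → P → Prop) (q p : Finset P × Finset P) : Prop :=
  IsFaceP incons q ∧ IsFaceP incons p ∧ FaceLT p q ∧
  ∀ r : Finset P × Finset P, IsFaceP incons r → FaceLT p r → FaceLT r q → False

/-- `p` and `q` have a meet in the face poset of `⊞_P`. -/
def HasMeet (incons : P → P → Prop) (p q : Finset P × Finset P) : Prop :=
  ∃ m : Finset P × Finset P, IsFaceP incons m ∧ FaceLE m p ∧ FaceLE m q ∧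
    ∀ m' : Finset P × Finset P, IsFaceP incons m' →
      FaceLE m' p → FaceLE m' q → FaceLE m' m

section Aux

variable {incons : P → P → Prop}

lemma mem_maxElems {I : Finset P} {x : P} :
    x ∈ maxElems I ↔ x ∈ I ∧ ∀ y ∈ I, ¬ x < y := by
  classical
  rw [maxElems, Finset.mem_filter]

lemma maxElems_subset {I : Finset P} : maxElems I ⊆ I :=
  fun _ hx => (mem_maxElems.mp hx).1

/-- Erasing an element of `M` keeps a face a face. -/
lemma faceA {I M : Finset P} (h : IsFace incons I M) (x : P) :
    IsFace incons I (M.erase x) :=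
  ⟨h.1, h.2.1, (Finset.erase_subset _ _).trans h.2.2⟩

/-- Erasing a maximal element from both components keeps a face a face. -/
lemma faceB {I M : Finset P} (h : IsFace incons I M) {x : P} (hx : x ∈ M) :
    IsFace incons (I.erase x) (M.erase x) := by
  obtain ⟨hd, hc, hm⟩ := h
  have hxmax := mem_maxElems.mp (hm hx)
  refine ⟨?_, ?_, ?_⟩
  · intro a ha b hb
    rw [Finset.mem_erase] at ha ⊢
    refine ⟨?_, hd a ha.2 b hb⟩
    rintro rfl
    exact hxmax.2 a ha.2 (lt_of_le_of_ne hb (fun h => ha.1 h.symm))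
  · intro a ha b hb
    exact hc a (Finset.mem_of_mem_erase ha) b (Finset.mem_of_mem_erase hb)
  · intro m hm'
    rw [Finset.mem_erase] at hm'
    have hmx := mem_maxElems.mp (hm hm'.2)
    exact mem_maxElems.mpr ⟨Finset.mem_erase.mpr ⟨hm'.1, hmx.1⟩,
      fun y hy => hmx.2 y (Finset.mem_of_mem_erase hy)⟩

lemma sandwich {s t : Finset P} {x : P} (h1 : s.erase x ⊆ t) (h2 : t ⊆ s) :
    t = s.erase x ∨ t = s := by
  by_cases hx : x ∈ t
  · right
    refine Finset.Subset.antisymm h2 (fun z hz => ?_)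
    by_cases hzx : z = x
    · exact hzx ▸ hx
    · exact h1 (Finset.mem_erase.mpr ⟨hzx, hz⟩)
  · exact Or.inl (Finset.Subset.antisymm
      (fun z hz => Finset.mem_erase.mpr ⟨fun h => hx (h ▸ hz), h2 hz⟩) h1)

/-- Characterization of covers in the face poset. -/
lemma cover_char (incons : P → P → Prop) (I M : Finset P) (hIM : IsFace incons I M)
    (p : Finset P × Finset P) :
    FaceCovers incons (I, M) p ↔
      ∃ x ∈ M, p = (I, M.erase x) ∨ p = (I.erase x, M.erase x) := by
  constructor
  · rintro ⟨hq, hp, ⟨⟨hM, hIMp, hpI⟩, hne⟩, hcov⟩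
    have hMx : ∃ x ∈ M, x ∉ p.2 := by
      by_contra h
      push_neg at h
      have hM2 : p.2 = M := Finset.Subset.antisymm hM h
      have h1 : p.1 = I := by
        refine Finset.Subset.antisymm hpI (fun z hz => ?_)
        by_cases hzM : z ∈ M
        · exact maxElems_subset (hp.2.2 (by rw [hM2]; exact hzM))
        · exact hIMp (Finset.mem_sdiff.mpr ⟨hz, hzM⟩)
      exact hne (Prod.ext h1 hM2)
    obtain ⟨x, hxM, hxp⟩ := hMx
    have hxI : x ∈ I := maxElems_subset (hIM.2.2 hxM)
    have hsub2 : p.2 ⊆ M.erase x :=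
      fun z hz => Finset.mem_erase.mpr ⟨fun h => hxp (h ▸ hz), hM hz⟩
    refine ⟨x, hxM, ?_⟩
    by_cases hx1 : x ∈ p.1
    · left
      by_contra hpr
      refine hcov (I, M.erase x) (faceA hIM x) ⟨⟨hsub2, ?_, hpI⟩, hpr⟩
        ⟨⟨Finset.erase_subset _ _, fun z hz => (Finset.mem_sdiff.mp hz).1,
          Finset.Subset.refl I⟩,
          fun h => (Finset.erase_eq_self.mp (congrArg Prod.snd h)) hxM⟩
      intro z hz
      rw [Finset.mem_sdiff, Finset.mem_erase] at hz
      obtain ⟨hzI, hz2⟩ := hz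
      by_cases hzx : z = x
      · exact hzx ▸ hx1
      · exact hIMp (Finset.mem_sdiff.mpr ⟨hzI, fun hzM => hz2 ⟨hzx, hzM⟩⟩)
    · right
      by_contra hpr
      refine hcov (I.erase x, M.erase x) (faceB hIM hxM) ⟨⟨hsub2, ?_, ?_⟩, hpr⟩
        ⟨⟨Finset.erase_subset _ _, ?_, Finset.erase_subset _ _⟩,
          fun h => (Finset.erase_eq_self.mp (congrArg Prod.fst h)) hxI⟩
      · intro z hz
        rw [Finset.mem_sdiff, Finset.mem_erase, Finset.mem_erase] at hz
        exact hIMp (Finset.mem_sdiff.mpr ⟨hz.1.2, fun hzM => hz.2 ⟨hz.1.1, hzM⟩⟩)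
      · exact fun z hz => Finset.mem_erase.mpr ⟨fun h => hx1 (h ▸ hz), hpI hz⟩
      · intro z hz
        rw [Finset.mem_sdiff] at hz
        exact Finset.mem_erase.mpr ⟨fun h => hz.2 (h ▸ hxM), hz.1⟩
  · rintro ⟨x, hxM, rfl | rfl⟩
    · have hxI : x ∈ I := maxElems_subset (hIM.2.2 hxM)
      refine ⟨hIM, faceA hIM x,
        ⟨⟨Finset.erase_subset _ _, fun z hz => (Finset.mem_sdiff.mp hz).1,
          Finset.Subset.refl I⟩,
          fun h => (Finset.erase_eq_self.mp (congrArg Prod.snd h)) hxM⟩, ?_⟩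
      rintro r hr ⟨⟨h1, h2, h3⟩, hpr⟩ ⟨⟨h4, h5, h6⟩, hrq⟩
      have hJ : r.1 = I := Finset.Subset.antisymm h6 h3
      rcases sandwich h1 h4 with h | h
      · exact hpr (Prod.ext hJ h).symm
      · exact hrq (Prod.ext hJ h)
    · have hxI : x ∈ I := maxElems_subset (hIM.2.2 hxM)
      refine ⟨hIM, faceB hIM hxM,
        ⟨⟨Finset.erase_subset _ _, ?_, Finset.erase_subset _ _⟩,
          fun h => (Finset.erase_eq_self.mp (congrArg Prod.fst h)) hxI⟩, ?_⟩
      · intro z hz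
        rw [Finset.mem_sdiff] at hz
        exact Finset.mem_erase.mpr ⟨fun h => hz.2 (h ▸ hxM), hz.1⟩
      · rintro r hr ⟨⟨h1, h2, h3⟩, hpr⟩ ⟨⟨h4, h5, h6⟩, hrq⟩
        rcases sandwich h1 h4 with hN | hN <;> rcases sandwich h3 h6 with hJ | hJ
        · exact hpr (Prod.ext hJ hN).symm
        · -- r.2 = M.erase x, r.1 = I : x ∈ r.1 \ r.2 ⊆ I.erase x, contradiction
          have : x ∈ r.1 \ r.2 := by
            rw [Finset.mem_sdiff, hJ, hN]
            exact ⟨hxI, fun h => (Finset.mem_erase.mp h).1 rfl⟩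
          exact (Finset.mem_erase.mp (h2 this)).1 rfl
        · -- r.2 = M, r.1 = I.erase x : x ∈ M ⊆ maxElems r.1 ⊆ r.1 = I.erase x
          have : x ∈ r.1 := maxElems_subset (hr.2.2 (by rw [hN]; exact hxM))
          rw [hJ] at this
          exact (Finset.mem_erase.mp this).1 rfl
        · exact hrq (Prod.ext hJ hN)

lemma hasMeet_comm {p q : Finset P × Finset P} (h : HasMeet incons p q) :
    HasMeet incons q p := by
  obtain ⟨m, h1, h2, h3, h4⟩ := h
  exact ⟨m, h1, h3, h2, fun m' a b c => h4 m' a c b⟩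

lemma meet1 {I M : Finset P} (hIM : IsFace incons I M) {x y : P}
    (hx : x ∈ M) (hy : y ∈ M) (hxy : x ≠ y) :
    HasMeet incons (I, M.erase x) (I, M.erase y) := by
  refine ⟨(I, (M.erase x).erase y), faceA (faceA hIM x) y,
    ⟨Finset.erase_subset _ _, fun z hz => (Finset.mem_sdiff.mp hz).1,
      Finset.Subset.refl I⟩,
    ⟨?_, fun z hz => (Finset.mem_sdiff.mp hz).1, Finset.Subset.refl I⟩, ?_⟩
  · exact Finset.erase_subset_erase _ (Finset.erase_subset _ _)
  · rintro m' hm' ⟨ha1, ha2, ha3⟩ ⟨hb1, hb2, hb3⟩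
    refine ⟨?_, ?_, ha3⟩
    · intro z hz
      have h1 := Finset.mem_erase.mp (ha1 hz)
      have h2 := Finset.mem_erase.mp (hb1 hz)
      exact Finset.mem_erase.mpr ⟨h2.1, Finset.mem_erase.mpr ⟨h1.1, h1.2⟩⟩
    · intro z hz
      rw [Finset.mem_sdiff, Finset.mem_erase, Finset.mem_erase] at hz
      obtain ⟨hzI, hz2⟩ := hz
      by_cases hzy : z = y
      · exact hb2 (Finset.mem_sdiff.mpr ⟨hzI,
          fun h => (Finset.mem_erase.mp h).1 hzy⟩)
      · refine ha2 (Finset.mem_sdiff.mpr ⟨hzI, fun h => ?_⟩)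
        obtain ⟨hzx, hzM⟩ := Finset.mem_erase.mp h
        exact hz2 ⟨hzy, hzx, hzM⟩

lemma meet2 {I M : Finset P} (hIM : IsFace incons I M) {x y : P}
    (hx : x ∈ M) (hy : y ∈ M) (hxy : x ≠ y) :
    HasMeet incons (I, M.erase x) (I.erase y, M.erase y) := by
  have hyMx : y ∈ M.erase x := Finset.mem_erase.mpr ⟨hxy.symm, hy⟩
  refine ⟨(I.erase y, (M.erase x).erase y), faceB (faceA hIM x) hyMx,
    ⟨Finset.erase_subset _ _, ?_, Finset.erase_subset _ _⟩,
    ⟨?_, fun z hz => (Finset.mem_sdiff.mp hz).1, Finset.Subset.refl _⟩, ?_⟩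
  · intro z hz
    rw [Finset.mem_sdiff, Finset.mem_erase] at hz
    obtain ⟨hzI, hz2⟩ := hz
    refine Finset.mem_erase.mpr ⟨fun h => ?_, hzI⟩
    subst h
    exact hz2 ⟨hxy.symm, hy⟩
  · exact Finset.erase_subset_erase _ (Finset.erase_subset _ _)
  · rintro m' hm' ⟨ha1, ha2, ha3⟩ ⟨hb1, hb2, hb3⟩
    refine ⟨?_, ?_, hb3⟩
    · intro z hz
      have h1 := Finset.mem_erase.mp (ha1 hz)
      have h2 := Finset.mem_erase.mp (hb1 hz)
      exact Finset.mem_erase.mpr ⟨h2.1, Finset.mem_erase.mpr ⟨h1.1, h1.2⟩⟩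
    · intro z hz
      rw [Finset.mem_sdiff] at hz
      obtain ⟨hzIy, hz2⟩ := hz
      obtain ⟨hzy, hzI⟩ := Finset.mem_erase.mp hzIy
      exact ha2 (Finset.mem_sdiff.mpr ⟨hzI,
        fun h => hz2 (Finset.mem_erase.mpr ⟨hzy, h⟩)⟩)

lemma meet3 {I M : Finset P} (hIM : IsFace incons I M) {x y : P}
    (hx : x ∈ M) (hy : y ∈ M) (hxy : x ≠ y) :
    HasMeet incons (I.erase x, M.erase x) (I.erase y, M.erase y) := by
  have hyMx : y ∈ M.erase x := Finset.mem_erase.mpr ⟨hxy.symm, hy⟩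
  have hxI : x ∈ I := maxElems_subset (hIM.2.2 hx)
  have hyI : y ∈ I := maxElems_subset (hIM.2.2 hy)
  refine ⟨((I.erase x).erase y, (M.erase x).erase y), faceB (faceB hIM hx) hyMx,
    ⟨Finset.erase_subset _ _, ?_, Finset.erase_subset _ _⟩,
    ⟨?_, ?_, ?_⟩, ?_⟩
  · intro z hz
    rw [Finset.mem_sdiff, Finset.mem_erase, Finset.mem_erase] at hz
    obtain ⟨⟨hzx, hzI⟩, hz2⟩ := hz
    have hzM : z ∉ M := fun h => hz2 ⟨hzx, h⟩
    exact Finset.mem_erase.mpr ⟨fun h => hzM (h ▸ hy),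
      Finset.mem_erase.mpr ⟨hzx, hzI⟩⟩
  · exact Finset.erase_subset_erase _ (Finset.erase_subset _ _)
  · intro z hz
    rw [Finset.mem_sdiff, Finset.mem_erase, Finset.mem_erase] at hz
    obtain ⟨⟨hzy, hzI⟩, hz2⟩ := hz
    have hzM : z ∉ M := fun h => hz2 ⟨hzy, h⟩
    exact Finset.mem_erase.mpr ⟨hzy,
      Finset.mem_erase.mpr ⟨fun h => hzM (h ▸ hx), hzI⟩⟩
  · exact Finset.erase_subset_erase _ (Finset.erase_subset _ _)
  · rintro m' hm' ⟨ha1, ha2, ha3⟩ ⟨hb1, hb2, hb3⟩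
    refine ⟨?_, ?_, ?_⟩
    · intro z hz
      have h1 := Finset.mem_erase.mp (ha1 hz)
      have h2 := Finset.mem_erase.mp (hb1 hz)
      exact Finset.mem_erase.mpr ⟨h2.1, Finset.mem_erase.mpr ⟨h1.1, h1.2⟩⟩
    · intro z hz
      rw [Finset.mem_sdiff] at hz
      obtain ⟨hzIxy, hz2⟩ := hz
      obtain ⟨hzy, hzIx⟩ := Finset.mem_erase.mp hzIxy
      exact ha2 (Finset.mem_sdiff.mpr ⟨hzIx,
        fun h => hz2 (Finset.mem_erase.mpr ⟨hzy, h⟩)⟩)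
    · intro z hz
      have h1 := Finset.mem_erase.mp (ha3 hz)
      have h2 := Finset.mem_erase.mp (hb3 hz)
      exact Finset.mem_erase.mpr ⟨h2.1, Finset.mem_erase.mpr ⟨h1.1, h1.2⟩⟩

lemma noMeet {I M : Finset P} (hIM : IsFace incons I M) {x : P} (hx : x ∈ M) :
    ¬ HasMeet incons (I, M.erase x) (I.erase x, M.erase x) := by
  rintro ⟨m, hm, ⟨_, h1, _⟩, ⟨_, _, h2⟩, _⟩
  have hxI : x ∈ I := maxElems_subset (hIM.2.2 hx)
  have hxm : x ∈ m.1 :=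
    h1 (Finset.mem_sdiff.mpr ⟨hxI, fun h => (Finset.mem_erase.mp h).1 rfl⟩)
  exact (Finset.mem_erase.mp (h2 hxm)).1 rfl

end Aux

/-- The covering relations in the face poset of `⊞_P` are exactly
`C(I, M \ {x}) ⋖ C(I, M)` and `C(I \ {x}, M \ {x}) ⋖ C(I, M)` for `x ∈ M`;
and the pairs of faces sharing a common cover but having no meet are exactly
the pairs `{C(I, M \ {x}), C(I \ {x}, M \ {x})}` for `x ∈ M`. -/
theorem covers_and_derivative_pairs (incons : P → P → Prop)
    (hirr : ∀ a, ¬ incons a a)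
    (hsymm : ∀ a b, incons a b → incons b a)
    (hup : ∀ a b a' b', incons a b → a ≤ a' → b ≤ b' → incons a' b') :
    (∀ I M : Finset P, IsFace incons I M →
      ∀ p : Finset P × Finset P,
        FaceCovers incons (I, M) p ↔
        ∃ x ∈ M, p = (I, M.erase x) ∨ p = (I.erase x, M.erase x)) ∧
    (∀ p q : Finset P × Finset P,
      IsFaceP incons p → IsFaceP incons q → p ≠ q →
      (((∃ r : Finset P × Finset P, FaceCovers incons r p ∧ FaceCovers incons r q) ∧
          ¬ HasMeet incons p q) ↔
        ∃ (I M : Finset P) (x : P), IsFace incons I M ∧ x ∈ M ∧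
          ({p, q} : Finset (Finset P × Finset P)) =
            {(I, M.erase x), (I.erase x, M.erase x)})) := by
  refine ⟨cover_char incons, ?_⟩
  intro p q hp hq hpq
  constructor
  · rintro ⟨⟨r, hrp, hrq⟩, hnom⟩
    have hrface : IsFace incons r.1 r.2 := hrp.1
    have hrp' : FaceCovers incons (r.1, r.2) p := by rwa [Prod.mk.eta]
    have hrq' : FaceCovers incons (r.1, r.2) q := by rwa [Prod.mk.eta]
    obtain ⟨x, hx, hpx⟩ := (cover_char incons r.1 r.2 hrface p).mp hrp'
    obtain ⟨y, hy, hqy⟩ := (cover_char incons r.1 r.2 hrface q).mp hrq'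
    rcases hpx with rfl | rfl <;> rcases hqy with rfl | rfl
    · by_cases hxy : x = y
      · subst hxy; exact absurd rfl hpq
      · exact absurd (meet1 hrface hx hy hxy) hnom
    · by_cases hxy : x = y
      · subst hxy; exact ⟨r.1, r.2, x, hrface, hx, rfl⟩
      · exact absurd (meet2 hrface hx hy hxy) hnom
    · by_cases hxy : x = y
      · subst hxy
        exact ⟨r.1, r.2, x, hrface, hx, Finset.pair_comm _ _⟩
      · exact absurd (hasMeet_comm (meet2 hrface hy hx (Ne.symm hxy))) hnom
    · by_cases hxy : x = y
      · subst hxy; exact absurd rfl hpq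
      · exact absurd (meet3 hrface hx hy hxy) hnom
  · rintro ⟨I, M, x, hIM, hx, hset⟩
    have hp' : p = (I, M.erase x) ∨ p = (I.erase x, M.erase x) := by
      have : p ∈ ({(I, M.erase x), (I.erase x, M.erase x)} :
          Finset (Finset P × Finset P)) := by
        rw [← hset]; exact Finset.mem_insert_self _ _
      simpa using this
    have hq' : q = (I, M.erase x) ∨ q = (I.erase x, M.erase x) := by
      have : q ∈ ({(I, M.erase x), (I.erase x, M.erase x)} :
          Finset (Finset P × Finset P)) := by
        rw [← hset]
        exact Finset.mem_insert_of_mem (Finset.mem_singleton_self _)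
      simpa using this
    have hcA : FaceCovers incons (I, M) (I, M.erase x) :=
      (cover_char incons I M hIM _).mpr ⟨x, hx, Or.inl rfl⟩
    have hcB : FaceCovers incons (I, M) (I.erase x, M.erase x) :=
      (cover_char incons I M hIM _).mpr ⟨x, hx, Or.inr rfl⟩
    rcases hp' with rfl | rfl <;> rcases hq' with rfl | rfl
    · exact absurd rfl hpq
    · exact ⟨⟨(I, M), hcA, hcB⟩, noMeet hIM hx⟩
    · exact ⟨⟨(I, M), hcB, hcA⟩, fun h => noMeet hIM hx (hasMeet_comm h)⟩
    · exact absurd rfl hpq
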